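/- Let A be a nonempty finite alphabet and μ a probability distribution on A. Let X₀, X₁, X₂, … be i.i.d. random variables with law μ, and for n ≥ 1 and a ∈ A let ν_n(a) = #{i < n : X_i = a}. Then almost surely (1/n) · log₂( n! / ∏_{a∈A} ν_n(a)! ) → h(μ) as n → ∞, where h(μ) = − Σ_{a∈A} μ(a) log₂ μ(a) is the Shannon entropy of μ. -/

import Mathlib

open MeasureTheory ProbabilityTheory

section Aux
open Real Filter Finset

lemma log_factorial_lb (m : ℕ) : (m:ℝ) * Real.log m - m ≤ Real.log m.factorial := by
  induction m with
  | zero => simp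
  | succ m ih =>
    rw [Nat.factorial_succ, Nat.cast_mul, Real.log_mul (by positivity) (by positivity)]
    have h1 : (m:ℝ) * Real.log (m+1) - (m:ℝ) * Real.log m ≤ 1 := by
      rcases Nat.eq_zero_or_pos m with h | h
      · simp [h]
      have hm : (0:ℝ) < m := by exact_mod_cast h
      have hlog := Real.log_le_sub_one_of_pos (show (0:ℝ) < ((m:ℝ)+1)/m by positivity)
      rw [Real.log_div (by positivity) (by positivity)] at hlog
      have : ((m:ℝ)+1)/m - 1 = 1/m := by field_simp; ring
      rw [this] at hlog
      have := mul_le_mul_of_nonneg_left hlog hm.le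
      rw [mul_sub] at this
      calc (m:ℝ) * Real.log (m+1) - (m:ℝ) * Real.log m ≤ (m:ℝ) * (1/m) := by linarith
        _ = 1 := by field_simp
    push_cast
    nlinarith [ih]

lemma log_factorial_ub (m : ℕ) : Real.log m.factorial ≤ ((m:ℝ)+1) * Real.log (m+1) - m := by
  induction m with
  | zero => simp
  | succ m ih =>
    rw [Nat.factorial_succ, Nat.cast_mul, Real.log_mul (by positivity) (by positivity)]
    have h1 : (1:ℝ) ≤ ((m:ℝ)+2) * (Real.log (m+2) - Real.log (m+1)) := by
      have hlog := Real.one_sub_inv_le_log_of_pos (show (0:ℝ) < ((m:ℝ)+2)/(m+1) by positivity)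
      rw [Real.log_div (by positivity) (by positivity)] at hlog
      have h2 : (((m:ℝ)+2)/((m:ℝ)+1))⁻¹ = ((m:ℝ)+1)/((m:ℝ)+2) := inv_div _ _
      rw [h2] at hlog
      have h3 : (1:ℝ) - ((m:ℝ)+1)/((m:ℝ)+2) = 1/((m:ℝ)+2) := by field_simp; ring
      rw [h3] at hlog
      rw [div_le_iff₀ (by positivity)] at hlog
      linarith [hlog]
    push_cast
    have e : ((m:ℝ)+1+1) = (m:ℝ)+2 := by ring
    rw [e]
    nlinarith [ih, h1, mul_sub ((m:ℝ)+2) (Real.log ((m:ℝ)+2)) (Real.log ((m:ℝ)+1))]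

/-- error term bound -/
lemma abs_err_le (m : ℕ) :
    |Real.log m.factorial - ((m:ℝ) * Real.log m - m)| ≤ 1 + Real.log (m+1) := by
  rw [abs_le]
  constructor
  · have h := log_factorial_lb m
    have : (0:ℝ) ≤ Real.log (m+1) := Real.log_nonneg (by push_cast; linarith [Nat.cast_nonneg (α := ℝ) m])
    linarith
  · have h := log_factorial_ub m
    have h1 : (m:ℝ) * Real.log (m+1) - (m:ℝ) * Real.log m ≤ 1 := by
      rcases Nat.eq_zero_or_pos m with hz | hpos
      · simp [hz]
      have hm : (0:ℝ) < m := by exact_mod_cast hpos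
      have hlog := Real.log_le_sub_one_of_pos (show (0:ℝ) < ((m:ℝ)+1)/m by positivity)
      rw [Real.log_div (by positivity) (by positivity)] at hlog
      have : ((m:ℝ)+1)/m - 1 = 1/m := by field_simp; ring
      rw [this] at hlog
      have := mul_le_mul_of_nonneg_left hlog hm.le
      rw [mul_sub] at this
      calc (m:ℝ) * Real.log (m+1) - (m:ℝ) * Real.log m ≤ (m:ℝ) * (1/m) := by linarith
        _ = 1 := by field_simp
    nlinarith [h, h1]

lemma tendsto_bound : Filter.Tendsto (fun n : ℕ => (1 + Real.log (n+1)) / n) atTop (nhds 0) := by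
  have h1 : Filter.Tendsto (fun n : ℕ => (1:ℝ)/n) atTop (nhds 0) :=
    tendsto_one_div_atTop_nhds_zero_nat
  have h2 : Filter.Tendsto (fun n : ℕ => Real.log (n+1) / (n+1)) atTop (nhds 0) := by
    have := Real.isLittleO_log_id_atTop.tendsto_div_nhds_zero
    exact this.comp (tendsto_atTop_add_const_right atTop 1 tendsto_natCast_atTop_atTop)
  have h3 : Filter.Tendsto (fun n : ℕ => ((n:ℝ)+1)/n) atTop (nhds 1) := by
    have : (fun n : ℕ => ((n:ℝ)+1)/n) =ᶠ[atTop] (fun n : ℕ => 1 + 1/n) := by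
      filter_upwards [eventually_ge_atTop 1] with n hn
      have hne : ((n:ℝ)) ≠ 0 := Nat.cast_ne_zero.mpr (by omega)
      rw [add_div, div_self hne]
    rw [Filter.tendsto_congr' this]
    simpa using tendsto_const_nhds.add h1
  have h4 : Filter.Tendsto (fun n : ℕ => Real.log (n+1)/(n+1) * (((n:ℝ)+1)/n)) atTop (nhds 0) := by
    simpa using h2.mul h3
  have heq : ∀ n : ℕ, (1 + Real.log (n+1)) / n = 1/n + Real.log (n+1)/(n+1) * (((n:ℝ)+1)/n) := by
    intro n
    rcases Nat.eq_zero_or_pos n with hz | hpos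
    · simp [hz]
    have hn : ((n:ℝ)) ≠ 0 := by
      have : (0:ℝ) < n := by exact_mod_cast hpos
      linarith
    field_simp
  exact Filter.Tendsto.congr (fun n => (heq n).symm) (by simpa using h1.add h4)

lemma key_det {A : Type*} [Fintype A] (ν : ℕ → A → ℕ)
    (hsum : ∀ n, ∑ a, ν n a = n)
    (p : A → ℝ) (hp : ∀ a, Filter.Tendsto (fun n => (ν n a : ℝ) / n) atTop (nhds (p a))) :
    Filter.Tendsto
      (fun n : ℕ => (1/(n:ℝ)) * (Real.log n.factorial - ∑ a, Real.log ((ν n a).factorial)))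
      atTop (nhds (-∑ a, p a * Real.log (p a))) := by
  classical
  set e : ℕ → ℝ := fun m => Real.log m.factorial - ((m:ℝ) * Real.log m - m) with he
  set G : ℕ → ℝ := fun n => ∑ a, Real.negMulLog ((ν n a : ℝ)/n) with hG
  set E : ℕ → ℝ := fun n => (1/(n:ℝ)) * (e n - ∑ a, e (ν n a)) with hE
  -- G tends to the entropy
  have hGlim : Filter.Tendsto G atTop (nhds (∑ a, Real.negMulLog (p a))) := by
    apply tendsto_finset_sum
    intro a _
    exact (Real.continuous_negMulLog.continuousAt).tendsto.comp (hp a)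
  -- E tends to 0
  have hElim : Filter.Tendsto E atTop (nhds 0) := by
    apply squeeze_zero_norm
      (a := fun n : ℕ => (1 + (Fintype.card A : ℝ)) * ((1 + Real.log (n+1)) / n))
    · intro n
      rcases Nat.eq_zero_or_pos n with hz | hpos
      · simp [hE, hz]
      have hn : (0:ℝ) < n := by exact_mod_cast hpos
      have hb : ∀ a : A, |e (ν n a)| ≤ 1 + Real.log (n+1) := by
        intro a
        refine (abs_err_le (ν n a)).trans ?_
        have hle : ν n a ≤ n := by
          have h0 := Finset.single_le_sum (f := fun b => ν n b)
            (fun b _ => Nat.zero_le _) (Finset.mem_univ a)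
          rwa [hsum n] at h0
        have : Real.log ((ν n a : ℝ)+1) ≤ Real.log ((n:ℝ)+1) := by
          apply Real.log_le_log (by positivity)
          have : (ν n a : ℝ) ≤ n := by exact_mod_cast hle
          linarith
        linarith
      have hsumabs : |e n - ∑ a, e (ν n a)| ≤ (1 + (Fintype.card A : ℝ)) * (1 + Real.log (n+1)) := by
        have h1 : |∑ a, e (ν n a)| ≤ ∑ a : A, (1 + Real.log (n+1)) :=
          (Finset.abs_sum_le_sum_abs _ _).trans (Finset.sum_le_sum fun a _ => hb a)
        have h2 : ∑ _a : A, (1 + Real.log (n+1)) = (Fintype.card A : ℝ) * (1 + Real.log (n+1)) := by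
          rw [Finset.sum_const, Finset.card_univ, nsmul_eq_mul]
        have h3 := abs_err_le n
        rw [h2] at h1
        calc |e n - ∑ a, e (ν n a)| ≤ |e n| + |∑ a, e (ν n a)| := abs_sub _ _
          _ ≤ (1 + (Fintype.card A : ℝ)) * (1 + Real.log (n+1)) := by nlinarith [h1, h3]
      calc ‖E n‖ = (1/(n:ℝ)) * |e n - ∑ a, e (ν n a)| := by
            rw [hE]; rw [Real.norm_eq_abs, abs_mul, abs_of_nonneg (by positivity : (0:ℝ) ≤ 1/(n:ℝ))]
        _ ≤ (1/(n:ℝ)) * ((1 + (Fintype.card A : ℝ)) * (1 + Real.log (n+1))) := by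
            apply mul_le_mul_of_nonneg_left hsumabs (by positivity)
        _ = (1 + (Fintype.card A : ℝ)) * ((1 + Real.log (n+1)) / n) := by ring
    · simpa using tendsto_bound.const_mul (1 + (Fintype.card A : ℝ))
  -- the identity
  have hmain : ∀ᶠ n : ℕ in atTop,
      (1/(n:ℝ)) * (Real.log n.factorial - ∑ a, Real.log ((ν n a).factorial)) = G n + E n := by
    filter_upwards [eventually_ge_atTop 1] with n hn
    have hn0 : ((n:ℝ)) ≠ 0 := Nat.cast_ne_zero.mpr (by omega)
    have hnpos : (0:ℝ) < n := by positivity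
    have hterm : ∀ a ∈ Finset.univ, (n:ℝ) * Real.negMulLog ((ν n a : ℝ)/n)
        = (ν n a:ℝ) * Real.log n - (ν n a:ℝ) * Real.log (ν n a) := by
      intro a _
      rcases Nat.eq_zero_or_pos (ν n a) with h | h
      · simp [h, Real.negMulLog]
      have hν : (0:ℝ) < (ν n a : ℝ) := by exact_mod_cast h
      rw [Real.negMulLog, Real.log_div (ne_of_gt hν) hn0]
      field_simp
      ring
    have hNG : (n:ℝ) * G n = (n:ℝ) * Real.log n - ∑ a, (ν n a:ℝ) * Real.log (ν n a) := by
      rw [hG, Finset.mul_sum, Finset.sum_congr rfl hterm, Finset.sum_sub_distrib,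
        ← Finset.sum_mul]
      have : (∑ a, (ν n a : ℝ)) = n := by exact_mod_cast congrArg Nat.cast (hsum n)
      rw [this]
    have hEsum : ∑ a, e (ν n a)
        = (∑ a, Real.log ((ν n a).factorial)) - (∑ a, (ν n a:ℝ) * Real.log (ν n a)) + n := by
      simp only [he]
      rw [Finset.sum_sub_distrib, Finset.sum_sub_distrib]
      have : (∑ a, (ν n a : ℝ)) = n := by exact_mod_cast congrArg Nat.cast (hsum n)
      rw [this]
      ring
    have : Real.log n.factorial - ∑ a, Real.log ((ν n a).factorial)
        = (n:ℝ) * G n + (e n - ∑ a, e (ν n a)) := by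
      rw [hNG, hEsum]
      simp only [he]
      ring
    rw [this, hE]
    field_simp
  have hlim := hGlim.add hElim
  rw [add_zero] at hlim
  have hfin : (∑ a, Real.negMulLog (p a)) = -∑ a, p a * Real.log (p a) := by
    rw [← Finset.sum_neg_distrib]
    exact Finset.sum_congr rfl fun a _ => by rw [Real.negMulLog]; ring
  rw [hfin] at hlim
  exact Filter.Tendsto.congr' (hmain.mono fun n h => h.symm) hlim

end Aux

section Main
open Real Filter Finset MeasureTheory ProbabilityTheory

theorem stmt12 (A : Type*) [Fintype A] [Nonempty A] [DecidableEq A]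
    [MeasurableSpace A] [MeasurableSingletonClass A] (μ : PMF A)
    (Ω : Type*) [MeasurableSpace Ω] (P : Measure Ω) [IsProbabilityMeasure P]
    -- X₀, X₁, X₂, … are i.i.d. with law μ
    (X : ℕ → Ω → A) (hmeas : ∀ i, Measurable (X i))
    (hindep : iIndepFun X P)
    (hident : ∀ i : ℕ, Measure.map (X i) P = μ.toMeasure) :
    -- almost surely (1/n) log₂( n! / ∏ₐ ν_n(a)! ) → h(μ)
    ∀ᵐ ω ∂P, Filter.Tendsto
      (fun n : ℕ => (1 / (n : ℝ)) * Real.logb 2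
        ((n.factorial : ℝ) /
          ∏ a : A, ((((Finset.range n).filter fun i => X i ω = a).card).factorial : ℝ)))
      Filter.atTop
      (nhds (-∑ a : A, (μ a).toReal * Real.logb 2 (μ a).toReal)) := by
  classical
  have hae : ∀ a : A, ∀ᵐ ω ∂P, Filter.Tendsto
      (fun n : ℕ => ((((Finset.range n).filter fun i => X i ω = a).card : ℝ)) / n)
      Filter.atTop (nhds ((μ a).toReal)) := by
    intro a
    set φ : A → ℝ := fun x => if x = a then 1 else 0 with hφ
    have hφmeas : Measurable φ := by
      apply Measurable.ite _ measurable_const measurable_const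
      exact measurableSet_eq
    set Y : ℕ → Ω → ℝ := fun i => φ ∘ X i with hY
    have hYmeas : ∀ i, Measurable (Y i) := fun i => hφmeas.comp (hmeas i)
    have hint : Integrable (Y 0) P := by
      refine Integrable.mono' (integrable_const (1:ℝ)) (hYmeas 0).aestronglyMeasurable ?_
      filter_upwards with ω
      simp only [hY, hφ, Function.comp_apply]
      split <;> simp
    have hindep' : Pairwise (Function.onFun (IndepFun · · P) Y) := by
      intro i j hij
      exact (hindep.comp (fun _ => φ) (fun _ => hφmeas)).indepFun hij
    have hident' : ∀ i, IdentDistrib (Y i) (Y 0) P P := by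
      intro i
      have hXid : IdentDistrib (X i) (X 0) P P :=
        ⟨(hmeas i).aemeasurable, (hmeas 0).aemeasurable, by rw [hident i, hident 0]⟩
      exact hXid.comp hφmeas
    have hS := strong_law_ae_real Y hint hindep' hident'
    have hEY : P[Y 0] = (μ a).toReal := by
      have h1 : Y 0 = Set.indicator (X 0 ⁻¹' {a}) (fun _ => (1:ℝ)) := by
        funext ω
        simp [hY, hφ, Set.indicator_apply, Set.mem_preimage]
      rw [h1, integral_indicator_const (1:ℝ) ((hmeas 0) (measurableSet_singleton a))]
      have h2 : P (X 0 ⁻¹' {a}) = μ a := by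
        have := Measure.map_apply (μ := P) (hmeas 0) (measurableSet_singleton a)
        rw [hident 0] at this
        rw [← this, PMF.toMeasure_apply_singleton _ _ (measurableSet_singleton a)]
      rw [Measure.real, h2]
      simp
    rw [hEY] at hS
    filter_upwards [hS] with ω hω
    have : ∀ n : ℕ, (∑ i ∈ Finset.range n, Y i ω)
        = ((((Finset.range n).filter fun i => X i ω = a).card : ℝ)) := by
      intro n
      rw [← Finset.sum_boole]
      rfl
    simpa only [this] using hω
  have hall : ∀ᵐ ω ∂P, ∀ a : A, Filter.Tendsto
      (fun n : ℕ => ((((Finset.range n).filter fun i => X i ω = a).card : ℝ)) / n)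
      Filter.atTop (nhds ((μ a).toReal)) := (ae_all_iff).mpr hae
  filter_upwards [hall] with ω hω
  set ν : ℕ → A → ℕ := fun n a => ((Finset.range n).filter fun i => X i ω = a).card with hν
  have hsum : ∀ n, ∑ a, ν n a = n := by
    intro n
    have h0 : (Finset.range n).card
        = ∑ b : A, ((Finset.range n).filter fun i => X i ω = b).card :=
      Finset.card_eq_sum_card_fiberwise (fun x _ => Finset.mem_univ _)
    rw [Finset.card_range] at h0
    exact h0.symm
  have T := key_det ν hsum (fun a => (μ a).toReal) hω
  have T2 := T.div_const (Real.log 2)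
  have hL : (-∑ a : A, (μ a).toReal * Real.log ((μ a).toReal)) / Real.log 2
      = -∑ a : A, (μ a).toReal * Real.logb 2 ((μ a).toReal) := by
    rw [neg_div, Finset.sum_div]
    congr 1
    exact Finset.sum_congr rfl fun a _ => by rw [Real.logb, mul_div_assoc]
  rw [hL] at T2
  refine T2.congr fun n => ?_
  have hfac : ∀ m : ℕ, ((m.factorial : ℝ)) ≠ 0 := fun m => by
    exact_mod_cast m.factorial_ne_zero
  rw [Real.logb, Real.log_div (hfac n) (by positivity),
    Real.log_prod (fun a _ => hfac (ν n a))]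
  ring

end Main
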